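/- arXiv:0807.3602 — 2 statements merged into one kernel-verified Lean document; each statement's English description precedes it below -/
import Mathlib

section
/- For any coweight μ ∈ P, the signed length of the translation t_μ is ε(t_μ) = ⟨μ, 2ρ⟩. -/
open scoped RealInnerProductSpace BigOperators

attribute [local instance] Classical.propDecidable

noncomputable section

variable {V : Type*} [NormedAddCommGroup V] [InnerProductSpace ℝ V]

/-- The coroot `α^∨ = 2α/⟨α,α⟩` of a root `α`. -/
def coroot' (α : V) : V := (2 / ⟪α, α⟫) • α

/-- The reflection `s_α` in the linear hyperplane orthogonal to `α`. -/
def sref (α : V) : V → V := fun x => x - ⟪x, α⟫ • coroot' α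

/-- Data of a reduced irreducible crystallographic root system `R` (recorded via its
positive system `Rpos` and simple roots `simple`) in a real inner product space. -/
structure RSData (V : Type*) [NormedAddCommGroup V] [InnerProductSpace ℝ V] (n : ℕ) where
  Rpos : Finset V
  simple : Fin n → V
  hsimple : ∀ i, simple i ∈ Rpos
  hnz : ∀ α ∈ Rpos, α ≠ 0
  hdisj : ∀ α ∈ Rpos, -α ∉ Rpos
  hind : LinearIndependent ℝ simple
  hspan : Submodule.span ℝ (Set.range simple) = ⊤
  hposcomb : ∀ β ∈ Rpos, ∃ c : Fin n → ℕ, β = ∑ i, (c i : ℝ) • simple i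
  hrefl : ∀ α ∈ Rpos, ∀ β ∈ Rpos, sref α β ∈ Rpos ∨ -(sref α β) ∈ Rpos
  hcrys : ∀ α ∈ Rpos, ∀ β ∈ Rpos, ∃ z : ℤ, ⟪β, coroot' α⟫ = (z : ℝ)
  hred : ∀ α ∈ Rpos, ∀ c : ℝ, c • α ∈ Rpos → c = 1
  hirr : ∀ S : Set V, (∀ α ∈ Rpos, ∀ β ∈ Rpos, α ∈ S → ⟪α, β⟫ ≠ 0 → β ∈ S) →
      (∃ α ∈ Rpos, α ∈ S) → ∀ β ∈ Rpos, β ∈ S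

/-- The finite Weyl group `W₀`, realized as the set of all compositions of the
reflections `s_α`, `α ∈ R`. -/
def W0Set (Rpos : Finset V) : Set (V → V) :=
  {w | ∃ l : List V, (∀ a ∈ l, a ∈ Rpos) ∧ w = l.foldr (fun a f => sref a ∘ f) id}

/-- Pairs `(α, k)` (with `α ∈ R⁺`) indexing affine hyperplanes
`H_{α+kδ} = {v | ⟪v,α⟫ + k = 0}` that are crossed positively when moving from `x` to `y`
(i.e. `x` lies on the negative side and `y` on the positive side). -/
def sepPos (Rpos : Finset V) (x y : V) : Set (V × ℤ) :=
  {q | q.1 ∈ Rpos ∧ ⟪x, q.1⟫ + (q.2 : ℝ) < 0 ∧ 0 < ⟪y, q.1⟫ + (q.2 : ℝ)}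

/-- The signed number of affine hyperplanes separating `x` from `y`:
positively crossed ones minus negatively crossed ones. -/
def signedLen (Rpos : Finset V) (x y : V) : ℤ :=
  (Nat.card (sepPos Rpos x y) : ℤ) - (Nat.card (sepPos Rpos y x) : ℤ)

/-- The total number of affine hyperplanes separating `x` from `y`. -/
def totalLen (Rpos : Finset V) (x y : V) : ℕ :=
  Nat.card (sepPos Rpos x y) + Nat.card (sepPos Rpos y x)

/-- For any coweight `μ ∈ P`, the signed length of the translation `t_μ`
is `ε(t_μ) = ⟨μ, 2ρ⟩`, where `ρ` is the half-sum of the positive roots.  Here the signed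
length is computed by counting, with signs, the affine hyperplanes separating the
fundamental alcove (with interior point `p₀`) from its translate by `μ`. -/
theorem signed_length_translation {n : ℕ} (D : RSData V n) (p₀ : V)
    (hp₀ : ∀ α ∈ D.Rpos, 0 < ⟪p₀, α⟫ ∧ ⟪p₀, α⟫ < 1)
    (μ : V) (hμ : ∀ α ∈ D.Rpos, ∃ z : ℤ, ⟪μ, α⟫ = (z : ℝ)) :
    (signedLen D.Rpos p₀ (p₀ + μ) : ℝ) =
      ⟪μ, (2 : ℝ) • ((1 / 2 : ℝ) • ∑ α ∈ D.Rpos, α)⟫ := by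

  classical
  set Z : V → ℤ := fun α => ⌊⟪μ, α⟫⌋ with hZdef
  have hZval : ∀ α ∈ D.Rpos, (Z α : ℝ) = ⟪μ, α⟫ := by
    intro α hα
    obtain ⟨z, hz⟩ := hμ α hα
    simp [hZdef, hz]
  -- description of the two separating sets as finsets
  have key : ∀ (f : V → Finset ℤ) (T : Set (V × ℤ)),
      (∀ q : V × ℤ, q ∈ T ↔ q.1 ∈ D.Rpos ∧ q.2 ∈ f q.1) →
      Nat.card T = ∑ α ∈ D.Rpos, (f α).card := by
    intro f T hT
    have hTeq : T = ↑(D.Rpos.biUnion fun α => (f α).image fun k => (α, k)) := by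
      ext ⟨α, k⟩
      simp only [hT ⟨α, k⟩, Finset.coe_biUnion, Set.mem_iUnion, Finset.mem_coe,
        Finset.mem_image, Finset.mem_biUnion]
      constructor
      · rintro ⟨h1, h2⟩; exact ⟨α, h1, k, h2, rfl⟩
      · rintro ⟨β, hβ, k', hk', h⟩
        obtain ⟨rfl, rfl⟩ := Prod.mk.injEq .. ▸ h
        exact ⟨hβ, hk'⟩
    rw [hTeq, Nat.card_coe_set_eq, Set.ncard_coe_finset]
    rw [Finset.card_biUnion]
    · refine Finset.sum_congr rfl fun α _ => ?_
      exact Finset.card_image_of_injective _ (fun a b h => (Prod.mk.injEq .. ▸ h).2)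
    · intro a _ b _ hab
      simp only [Finset.disjoint_left, Finset.mem_image]
      rintro ⟨x, y⟩ ⟨k, _, h⟩ ⟨k', _, h'⟩
      obtain ⟨rfl, rfl⟩ := Prod.mk.injEq .. ▸ h
      obtain ⟨rfl, -⟩ := Prod.mk.injEq .. ▸ h'
      exact hab rfl
  have c1 : Nat.card (sepPos D.Rpos p₀ (p₀ + μ)) =
      ∑ α ∈ D.Rpos, (Finset.Icc (-(Z α)) (-1)).card := by
    refine key _ _ ?_
    rintro ⟨α, k⟩
    simp only [sepPos, Set.mem_setOf_eq, Finset.mem_Icc]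
    constructor
    · rintro ⟨hα, h2, h3⟩
      obtain ⟨h0, h1⟩ := hp₀ α hα
      rw [inner_add_left, ← hZval α hα] at h3
      refine ⟨hα, ?_, ?_⟩
      · have hlt : (-1 - Z α : ℤ) < (k : ℤ) := by
          have : ((-1 - Z α : ℤ) : ℝ) < (k : ℝ) := by push_cast; linarith
          exact_mod_cast this
        linarith [Int.lt_iff_add_one_le.mp hlt]
      · have hlt : (k : ℤ) < 0 := by
          have : (k : ℝ) < 0 := by linarith
          exact_mod_cast this
        linarith [Int.lt_iff_add_one_le.mp hlt]
    · rintro ⟨hα, h2, h3⟩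
      obtain ⟨h0, h1⟩ := hp₀ α hα
      have h2' : (-(Z α) : ℝ) ≤ (k : ℝ) := by exact_mod_cast h2
      have h3' : (k : ℝ) ≤ -1 := by exact_mod_cast h3
      refine ⟨hα, by linarith, ?_⟩
      rw [inner_add_left, ← hZval α hα]
      linarith
  have c2 : Nat.card (sepPos D.Rpos (p₀ + μ) p₀) =
      ∑ α ∈ D.Rpos, (Finset.Icc 0 (-(Z α) - 1)).card := by
    refine key _ _ ?_
    rintro ⟨α, k⟩
    simp only [sepPos, Set.mem_setOf_eq, Finset.mem_Icc]
    constructor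
    · rintro ⟨hα, h2, h3⟩
      obtain ⟨h0, h1⟩ := hp₀ α hα
      rw [inner_add_left, ← hZval α hα] at h2
      refine ⟨hα, ?_, ?_⟩
      · have hlt : (-1 : ℤ) < k := by
          have : (-1 : ℝ) < (k : ℝ) := by linarith
          exact_mod_cast this
        linarith [Int.lt_iff_add_one_le.mp hlt]
      · have hlt : (k : ℤ) < -(Z α) := by
          have : (k : ℝ) < ((-(Z α) : ℤ) : ℝ) := by push_cast; linarith
          exact_mod_cast this
        linarith [Int.lt_iff_add_one_le.mp hlt]
    · rintro ⟨hα, h2, h3⟩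
      obtain ⟨h0, h1⟩ := hp₀ α hα
      have h2' : (0 : ℝ) ≤ (k : ℝ) := by exact_mod_cast h2
      have h3' : (k : ℝ) ≤ ((-(Z α) - 1 : ℤ) : ℝ) := by exact_mod_cast h3
      push_cast at h3'
      refine ⟨hα, ?_, by linarith⟩
      rw [inner_add_left, ← hZval α hα]
      linarith
  have hsl : signedLen D.Rpos p₀ (p₀ + μ) = ∑ α ∈ D.Rpos, Z α := by
    rw [signedLen, c1, c2]
    push_cast
    rw [← Finset.sum_sub_distrib]
    refine Finset.sum_congr rfl fun α _ => ?_
    rw [Int.card_Icc, Int.card_Icc]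
    have h1 : (-1 + 1 - -(Z α)) = Z α := by ring
    have h2 : (-(Z α) - 1 + 1 - 0) = -(Z α) := by ring
    rw [h1, h2]
    omega
  rw [hsl, smul_smul]
  norm_num
  rw [inner_sum]
  exact Finset.sum_congr rfl fun α hα => hZval α hα
end
end

section
/- For a dominant coweight λ, the saturated set Π_λ equals conv(W_0 λ) ∩ (λ + Q): a coweight μ lies in Π_λ if and only if μ ∈ λ + Q and μ lies in the convex hull of the Weyl group orbit of λ. -/
open scoped RealInnerProductSpace BigOperators

attribute [local instance] Classical.propDecidable

noncomputable section

variable {V : Type*} [NormedAddCommGroup V] [InnerProductSpace ℝ V]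

/-- `Q⁺`: the set of nonnegative integer combinations of the simple coroots. -/
def QPlus {n : ℕ} (D : RSData V n) : Set V :=
  {v | ∃ c : Fin n → ℕ, v = ∑ i, (c i : ℝ) • coroot' (D.simple i)}

/-- Membership in the coweight lattice `P`. -/
def IsCoweight {n : ℕ} (D : RSData V n) (v : V) : Prop :=
  ∀ α ∈ D.Rpos, ∃ z : ℤ, ⟪v, α⟫ = (z : ℝ)

/-- Dominant coweights `P⁺`. -/
def IsDominant {n : ℕ} (D : RSData V n) (v : V) : Prop :=
  IsCoweight D v ∧ ∀ α ∈ D.Rpos, 0 ≤ ⟪v, α⟫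

/-- The saturated set `Π_λ = {wμ : μ ∈ P⁺, μ ⪯ λ, w ∈ W₀}` with highest coweight `λ`. -/
def PiSet {n : ℕ} (D : RSData V n) (lam : V) : Set V :=
  {x | ∃ μ, (IsDominant D μ ∧ lam - μ ∈ QPlus D) ∧ ∃ w ∈ W0Set D.Rpos, x = w μ}


/-! ### Auxiliary development -/

section Basics

lemma inner_self_pos' {α : V} (h : α ≠ 0) : 0 < ⟪α, α⟫ :=
  lt_of_le_of_ne real_inner_self_nonneg (fun he => h (inner_self_eq_zero.mp he.symm))

lemma sref_apply (α x : V) : sref α x = x - (⟪x, α⟫ * (2 / ⟪α, α⟫)) • α := by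
  simp [sref, coroot', smul_smul]

lemma sref_def (α x : V) : sref α x = x - ⟪x, α⟫ • coroot' α := rfl

lemma sref_apply' (α x : V) : sref α x = x - ⟪x, coroot' α⟫ • α := by
  rw [sref_apply, coroot', real_inner_smul_right]
  ring_nf

lemma sref_add (α x y : V) : sref α (x + y) = sref α x + sref α y := by
  simp only [sref, inner_add_left]; module

lemma sref_smul (α : V) (c : ℝ) (x : V) : sref α (c • x) = c • sref α x := by
  simp only [sref, real_inner_smul_left, smul_sub, smul_smul]

lemma sref_zero_left (x : V) : sref 0 x = x := by
  simp [sref, coroot']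

lemma sref_neg_apply (α x : V) : sref α (-x) = - sref α x := by
  have := sref_smul α (-1) x
  simpa using this

lemma sref_sub (α x y : V) : sref α (x - y) = sref α x - sref α y := by
  rw [sub_eq_add_neg, sref_add, sref_neg_apply, sub_eq_add_neg]

lemma sref_inner (α x y : V) : ⟪sref α x, sref α y⟫ = ⟪x, y⟫ := by
  rcases eq_or_ne α 0 with rfl | h
  · rw [sref_zero_left, sref_zero_left]
  · have hα : ⟪α, α⟫ ≠ 0 := ne_of_gt (inner_self_pos' h)
    simp only [sref_apply, inner_sub_left, inner_sub_right, real_inner_smul_left,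
      real_inner_smul_right]
    rw [real_inner_comm α x, real_inner_comm y α]
    field_simp
    ring

lemma sref_adj (α x y : V) : ⟪sref α x, y⟫ = ⟪x, sref α y⟫ := by
  rcases eq_or_ne α 0 with rfl | h
  · rw [sref_zero_left, sref_zero_left]
  · simp only [sref_apply, inner_sub_left, inner_sub_right, real_inner_smul_left,
      real_inner_smul_right]
    rw [real_inner_comm α y]
    ring

lemma sref_root {α : V} (h : α ≠ 0) : sref α α = -α := by
  have hα : ⟪α, α⟫ ≠ 0 := ne_of_gt (inner_self_pos' h)
  rw [sref_apply]
  rw [show ⟪α, α⟫ * (2 / ⟪α, α⟫) = 2 by field_simp]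
  module

lemma sref_sref (α x : V) : sref α (sref α x) = x := by
  rcases eq_or_ne α 0 with rfl | h
  · rw [sref_zero_left, sref_zero_left]
  · conv_lhs => rw [sref_apply α x]
    rw [sref_sub, sref_smul, sref_root h, sref_apply α x]
    module

lemma coroot'_smul_pos {α : V} {c : ℝ} (hc : 0 < c) : coroot' (c • α) = c⁻¹ • coroot' α := by
  simp only [coroot', real_inner_smul_left, real_inner_smul_right, smul_smul]
  rcases eq_or_ne α 0 with rfl | h
  · simp
  · have hα : ⟪α, α⟫ ≠ 0 := ne_of_gt (inner_self_pos' h)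
    congr 1
    field_simp

lemma coroot'_neg (α : V) : coroot' (-α) = - coroot' α := by
  simp only [coroot', inner_neg_neg, smul_neg]

end Basics


section Group

lemma sref_neg (α : V) : sref (-α) = sref α := by
  funext x
  simp only [sref, inner_neg_right, coroot'_neg, smul_neg, neg_smul, neg_neg]

lemma coroot'_sref (α x : V) : coroot' (sref α x) = sref α (coroot' x) := by
  simp only [coroot', sref_smul]
  rw [sref_inner]

/-- Conjugation formula for reflections. -/
lemma sref_conj (α γ : V) : sref (sref α γ) = sref α ∘ sref γ ∘ sref α := by
  funext y
  show sref (sref α γ) y = sref α (sref γ (sref α y))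
  have h1 : ⟪sref α y, coroot' γ⟫ = ⟪y, sref α (coroot' γ)⟫ := sref_adj α y (coroot' γ)
  rw [sref_apply' γ (sref α y), sref_sub, sref_smul, sref_sref, sref_apply' (sref α γ) y,
    coroot'_sref, h1]

lemma wlist_foldr_comp (l : List V) (g : V → V) :
    l.foldr (fun a f => sref a ∘ f) g = (l.foldr (fun a f => sref a ∘ f) id) ∘ g := by
  induction l with
  | nil => rfl
  | cons a l ih => simp only [List.foldr_cons, ih]; rfl

lemma W0.id_mem (Rpos : Finset V) : id ∈ W0Set Rpos := ⟨[], by simp, rfl⟩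

lemma W0.sref_mem {Rpos : Finset V} {α : V} (h : α ∈ Rpos) : sref α ∈ W0Set Rpos :=
  ⟨[α], by simpa using h, rfl⟩

lemma W0.comp_mem {Rpos : Finset V} {w w' : V → V} (hw : w ∈ W0Set Rpos)
    (hw' : w' ∈ W0Set Rpos) : w ∘ w' ∈ W0Set Rpos := by
  obtain ⟨l, hl, rfl⟩ := hw
  obtain ⟨l', hl', rfl⟩ := hw'
  refine ⟨l ++ l', fun a ha => ?_, ?_⟩
  · rcases List.mem_append.mp ha with h | h
    · exact hl a h
    · exact hl' a h
  · rw [List.foldr_append]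
    exact (wlist_foldr_comp l _).symm

/-- Induction principle for `W0Set`. -/
lemma W0.induction {Rpos : Finset V} (P : (V → V) → Prop) (h0 : P id)
    (hs : ∀ α ∈ Rpos, ∀ w, w ∈ W0Set Rpos → P w → P (sref α ∘ w)) :
    ∀ w ∈ W0Set Rpos, P w := by
  rintro w ⟨l, hl, rfl⟩
  induction l with
  | nil => exact h0
  | cons a l ih =>
      have hmem : (l.foldr (fun a f => sref a ∘ f) id) ∈ W0Set Rpos :=
        ⟨l, fun b hb => hl b (List.mem_cons_of_mem a hb), rfl⟩
      exact hs a (hl a List.mem_cons_self) _ hmem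
        (ih (fun b hb => hl b (List.mem_cons_of_mem a hb)))

lemma W0.add {Rpos : Finset V} {w : V → V} (hw : w ∈ W0Set Rpos) (x y : V) :
    w (x + y) = w x + w y := by
  refine W0.induction (fun w => ∀ x y, w (x + y) = w x + w y) (fun _ _ => rfl) ?_ w hw x y
  intro α _ u _ ih x y
  show sref α (u (x+y)) = sref α (u x) + sref α (u y)
  rw [ih, sref_add]

lemma W0.smul {Rpos : Finset V} {w : V → V} (hw : w ∈ W0Set Rpos) (c : ℝ) (x : V) :
    w (c • x) = c • w x := by
  refine W0.induction (fun w => ∀ c x, w ((c:ℝ) • x) = c • w x) (fun _ _ => rfl) ?_ w hw c x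
  intro α _ u _ ih c x
  show sref α (u (c • x)) = c • sref α (u x)
  rw [ih, sref_smul]

lemma W0.inner {Rpos : Finset V} {w : V → V} (hw : w ∈ W0Set Rpos) (x y : V) :
    ⟪w x, w y⟫ = ⟪x, y⟫ := by
  refine W0.induction (fun w => ∀ x y, ⟪w x, w y⟫ = ⟪x, y⟫) (fun _ _ => rfl) ?_ w hw x y
  intro α _ u _ ih x y
  show ⟪sref α (u x), sref α (u y)⟫ = ⟪x, y⟫
  rw [sref_inner, ih]

lemma W0.inv {Rpos : Finset V} {w : V → V} (hw : w ∈ W0Set Rpos) :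
    ∃ w' ∈ W0Set Rpos, (∀ x, w' (w x) = x) ∧ (∀ x, w (w' x) = x) := by
  refine W0.induction (fun w => ∃ w' ∈ W0Set Rpos, (∀ x, w' (w x) = x) ∧ (∀ x, w (w' x) = x))
    ⟨id, W0.id_mem Rpos, fun _ => rfl, fun _ => rfl⟩ ?_ w hw
  intro α hα u _ ⟨u', hu', h1, h2⟩
  refine ⟨u' ∘ sref α, W0.comp_mem hu' (W0.sref_mem hα), fun x => ?_, fun x => ?_⟩
  · show u' (sref α (sref α (u x))) = x
    rw [sref_sref, h1]
  · show sref α (u (u' (sref α x))) = x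
    rw [h2, sref_sref]

lemma W0.adj {Rpos : Finset V} {w w' : V → V} (hw : w ∈ W0Set Rpos)
    (hw' : w' ∈ W0Set Rpos) (hinv : ∀ x, w (w' x) = x) (x y : V) : ⟪w x, y⟫ = ⟪x, w' y⟫ := by
  conv_lhs => rw [← hinv y]
  rw [W0.inner hw]

/-- The conjugation formula for `w ∈ W₀`: `s_{wγ} ∘ w = w ∘ s_γ`. -/
lemma W0.conj {Rpos : Finset V} {w : V → V} (hw : w ∈ W0Set Rpos) (γ : V) :
    sref (w γ) ∘ w = w ∘ sref γ := by
  refine W0.induction (fun w => ∀ γ, sref (w γ) ∘ w = w ∘ sref γ) (fun _ => rfl) ?_ w hw γ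
  intro α _ u _ ih γ
  show sref (sref α (u γ)) ∘ (sref α ∘ u) = (sref α ∘ u) ∘ sref γ
  funext x
  show sref (sref α (u γ)) (sref α (u x)) = sref α (u (sref γ x))
  have h1 := congrFun (sref_conj α (u γ)) (sref α (u x))
  have h2 := congrFun (ih γ) x
  simp only [Function.comp] at h1 h2 ⊢
  rw [h1, sref_sref, h2]

lemma W0.coroot'_comm {Rpos : Finset V} {w : V → V} (hw : w ∈ W0Set Rpos) (x : V) :
    w (coroot' x) = coroot' (w x) := by
  refine W0.induction (fun w => ∀ x, w (coroot' x) = coroot' (w x)) (fun _ => rfl) ?_ w hw x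
  intro α _ u _ ih x
  show sref α (u (coroot' x)) = coroot' (sref α (u x))
  rw [ih, coroot'_sref]

end Group


section Roots

variable {n : ℕ} (D : RSData V n)

/-- The basis of simple roots. -/
def rbasis : Module.Basis (Fin n) ℝ V := Module.Basis.mk D.hind (D.hspan ▸ le_rfl)

lemma rbasis_apply (i : Fin n) : rbasis D i = D.simple i := Module.Basis.mk_apply _ _ _

lemma repr_comb (d : Fin n → ℝ) (j : Fin n) :
    (rbasis D).repr (∑ i, d i • D.simple i) j = d j := by
  have : (∑ i, d i • D.simple i) = ∑ i, d i • (rbasis D) i := by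
    simp_rw [rbasis_apply]
  rw [this, Module.Basis.repr_sum_self]

lemma simple_ne_zero (i : Fin n) : D.simple i ≠ 0 := D.hnz _ (D.hsimple i)

lemma simple_inner_pos (i : Fin n) : 0 < ⟪D.simple i, D.simple i⟫ :=
  inner_self_pos' (simple_ne_zero D i)

lemma root_repr_nonneg {β : V} (hβ : β ∈ D.Rpos) (j : Fin n) :
    0 ≤ (rbasis D).repr β j := by
  obtain ⟨c, hc⟩ := D.hposcomb β hβ
  rw [hc, repr_comb]
  positivity

variable {D}

/-- A nonzero vector whose simple-root coordinates are all `≤ 0` while being a positive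
root leads to a contradiction; more precisely a positive root has some positive coordinate. -/
lemma root_ne_zero {β : V} (hβ : β ∈ D.Rpos) : β ≠ 0 := D.hnz _ hβ

/-- If `β` is a positive root different from the simple root `αᵢ`, then `sᵢ β` is again a
positive root. -/
lemma sref_simple_mem {β : V} (hβ : β ∈ D.Rpos) (i : Fin n) (hne : β ≠ D.simple i) :
    sref (D.simple i) β ∈ D.Rpos := by
  by_contra hnot
  have hneg : -(sref (D.simple i) β) ∈ D.Rpos := by
    rcases D.hrefl _ (D.hsimple i) _ hβ with h | h
    · exact absurd h hnot
    · exact h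
  -- coordinates of β vanish away from i
  have hrepr : ∀ j, j ≠ i → (rbasis D).repr β j = 0 := by
    intro j hj
    have h1 : 0 ≤ (rbasis D).repr β j := root_repr_nonneg D hβ j
    have h2 : 0 ≤ (rbasis D).repr (-(sref (D.simple i) β)) j := root_repr_nonneg D hneg j
    have h3 : (rbasis D).repr (-(sref (D.simple i) β)) j = -(rbasis D).repr β j := by
      rw [sref_apply]
      simp only [map_neg, map_sub, map_smul, Finsupp.coe_neg, Finsupp.coe_sub,
        Finsupp.coe_smul, Pi.neg_apply, Pi.sub_apply, Pi.smul_apply, smul_eq_mul]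
      have : (rbasis D).repr (D.simple i) j = 0 := by
        rw [← rbasis_apply, Module.Basis.repr_self, Finsupp.single_apply]
        simp [hj.symm]
      rw [this]
      ring
    rw [h3] at h2
    linarith
  -- hence β is a multiple of the simple root αᵢ
  have hβeq : β = ((rbasis D).repr β i) • D.simple i := by
    conv_lhs => rw [← (rbasis D).sum_repr β]
    rw [Finset.sum_eq_single i]
    · rw [rbasis_apply]
    · intro j _ hj
      rw [hrepr j hj, zero_smul]
    · intro h
      exact absurd (Finset.mem_univ i) h
  have : (rbasis D).repr β i = 1 := D.hred _ (D.hsimple i) _ (hβeq ▸ hβ)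
  rw [this, one_smul] at hβeq
  exact hne hβeq

/-- If `β ∈ R⁺` and `sᵢ β ∉ R⁺` then `β = αᵢ`. -/
lemma eq_simple_of_sref_not_mem {β : V} (hβ : β ∈ D.Rpos) (i : Fin n)
    (h : sref (D.simple i) β ∉ D.Rpos) : β = D.simple i := by
  by_contra hne
  exact h (sref_simple_mem hβ i hne)

/-- Elements of `W₀` map roots to roots (up to sign). -/
lemma W0.map_root {w : V → V} (hw : w ∈ W0Set D.Rpos) {α : V} (hα : α ∈ D.Rpos) :
    w α ∈ D.Rpos ∨ -(w α) ∈ D.Rpos := by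
  refine W0.induction (fun w => ∀ α ∈ D.Rpos, w α ∈ D.Rpos ∨ -(w α) ∈ D.Rpos)
    (fun α hα => Or.inl hα) ?_ w hw α hα
  intro a ha u _ ih α hα
  rcases ih α hα with h | h
  · exact D.hrefl _ ha _ h
  · show sref a (u α) ∈ D.Rpos ∨ -(sref a (u α)) ∈ D.Rpos
    have e : sref a (-(u α)) = -(sref a (u α)) := sref_neg_apply a (u α)
    rcases D.hrefl _ ha _ h with h' | h'
    · exact Or.inr (e ▸ h')
    · rw [e, neg_neg] at h'
      exact Or.inl h'

end Roots


section Algorithm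

variable {n : ℕ} {D : RSData V n}

/-- If `v` pairs nonnegatively with all simple roots then with all positive roots. -/
lemma dominantish_of_simples {v : V} (h : ∀ i, 0 ≤ ⟪v, D.simple i⟫) :
    ∀ α ∈ D.Rpos, 0 ≤ ⟪v, α⟫ := by
  intro α hα
  obtain ⟨c, hc⟩ := D.hposcomb α hα
  rw [hc, inner_sum]
  refine Finset.sum_nonneg fun i _ => ?_
  rw [real_inner_smul_right]
  exact mul_nonneg (Nat.cast_nonneg _) (h i)

/-- The set of positive roots pairing negatively with `v`. -/
def negSet (D : RSData V n) (v : V) : Finset V := D.Rpos.filter (fun α => ⟪v, α⟫ < 0)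

lemma negSet_card_lt {v : V} {i : Fin n} (hi : ⟪v, D.simple i⟫ < 0) :
    (negSet D (sref (D.simple i) v)).card < (negSet D v).card := by
  have hmemi : D.simple i ∈ negSet D v := Finset.mem_filter.mpr ⟨D.hsimple i, hi⟩
  have hcard : (negSet D (sref (D.simple i) v)).card ≤ ((negSet D v).erase (D.simple i)).card := by
    refine Finset.card_le_card_of_injOn (fun α => sref (D.simple i) α) ?_ ?_
    · intro α hα
      rw [negSet, Finset.mem_coe, Finset.mem_filter] at hα
      obtain ⟨hα1, hα2⟩ := hα
      have hinner : ⟪v, sref (D.simple i) α⟫ < 0 := by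
        rw [← sref_adj]; exact hα2
      have hαne : α ≠ D.simple i := by
        rintro rfl
        rw [sref_adj, sref_root (simple_ne_zero D i), inner_neg_right] at hα2
        linarith
      have hmem : sref (D.simple i) α ∈ D.Rpos := sref_simple_mem hα1 i hαne
      refine Finset.mem_erase.mpr ⟨?_, Finset.mem_filter.mpr ⟨hmem, hinner⟩⟩
      intro heq
      simp only at heq
      have h' := congrArg (sref (D.simple i)) heq
      rw [sref_sref, sref_root (simple_ne_zero D i)] at h'
      subst h'
      exact D.hdisj _ (D.hsimple i) hα1
    · intro a _ b _ hab
      have := congrArg (sref (D.simple i)) hab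
      rwa [sref_sref, sref_sref] at this
  have : ((negSet D v).erase (D.simple i)).card < (negSet D v).card :=
    Finset.card_erase_lt_of_mem hmemi
  omega

lemma exists_dominantish_aux : ∀ (N : ℕ) (v : V), (negSet D v).card ≤ N →
    ∃ w ∈ W0Set D.Rpos, (∀ α ∈ D.Rpos, 0 ≤ ⟪w v, α⟫) ∧
      ∀ f, (∀ α ∈ D.Rpos, 0 ≤ ⟪f, α⟫) → ⟪f, v⟫ ≤ ⟪f, w v⟫ := by
  intro N
  induction N with
  | zero =>
      intro v hv
      refine ⟨id, W0.id_mem _, fun α hα => ?_, fun f _ => le_refl _⟩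
      by_contra hneg
      have : α ∈ negSet D v := Finset.mem_filter.mpr ⟨hα, lt_of_not_ge hneg⟩
      have := Finset.card_pos.mpr ⟨α, this⟩
      omega
  | succ N ih =>
      intro v hv
      by_cases hdom : ∀ i, 0 ≤ ⟪v, D.simple i⟫
      · exact ⟨id, W0.id_mem _, dominantish_of_simples hdom, fun f _ => le_refl _⟩
      · push_neg at hdom
        obtain ⟨i, hi⟩ := hdom
        have hi' : ⟪v, D.simple i⟫ < 0 := hi
        have hlt := negSet_card_lt hi'
        obtain ⟨w, hw, hwdom, hwmon⟩ := ih (sref (D.simple i) v) (by omega)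
        refine ⟨w ∘ sref (D.simple i), W0.comp_mem hw (W0.sref_mem (D.hsimple i)), hwdom, ?_⟩
        intro f hf
        have step : ⟪f, v⟫ ≤ ⟪f, sref (D.simple i) v⟫ := by
          rw [sref_apply, inner_sub_right, real_inner_smul_right]
          have h1 : 0 ≤ ⟪f, D.simple i⟫ := hf _ (D.hsimple i)
          have h2 : 0 < (2 : ℝ) / ⟪D.simple i, D.simple i⟫ := by
            have := simple_inner_pos D i
            positivity
          have h3 : 0 ≤ (-⟪v, D.simple i⟫) * ((2:ℝ) / ⟪D.simple i, D.simple i⟫) * ⟪f, D.simple i⟫ :=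
            mul_nonneg (mul_nonneg (by linarith) (le_of_lt h2)) h1
          linarith
        exact le_trans step (hwmon f hf)

lemma exists_dominantish (v : V) :
    ∃ w ∈ W0Set D.Rpos, (∀ α ∈ D.Rpos, 0 ≤ ⟪w v, α⟫) ∧
      ∀ f, (∀ α ∈ D.Rpos, 0 ≤ ⟪f, α⟫) → ⟪f, v⟫ ≤ ⟪f, w v⟫ :=
  exists_dominantish_aux (negSet D v).card v le_rfl

end Algorithm


section Lattice

variable {n : ℕ} {D : RSData V n}

/-- The coroot lattice `Q`. -/
def corL (D : RSData V n) : Submodule ℤ V :=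
  Submodule.span ℤ (Set.range fun i : Fin n => coroot' (D.simple i))

/-- Words in the simple reflections. -/
def sprod (D : RSData V n) (l : List (Fin n)) : V → V :=
  l.foldr (fun i f => sref (D.simple i) ∘ f) id

lemma sprod_nil : sprod D ([] : List (Fin n)) = id := rfl

lemma sprod_cons (i : Fin n) (l : List (Fin n)) :
    sprod D (i :: l) = sref (D.simple i) ∘ sprod D l := rfl

lemma sprod_append (l₁ l₂ : List (Fin n)) :
    sprod D (l₁ ++ l₂) = sprod D l₁ ∘ sprod D l₂ := by
  induction l₁ with
  | nil => rfl
  | cons i l ih => rw [List.cons_append, sprod_cons, sprod_cons, ih]; rfl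

lemma sprod_mem (l : List (Fin n)) : sprod D l ∈ W0Set D.Rpos := by
  induction l with
  | nil => exact W0.id_mem _
  | cons i l ih =>
      rw [show sprod D (i :: l) = sref (D.simple i) ∘ sprod D l from rfl]
      exact W0.comp_mem (W0.sref_mem (D.hsimple i)) ih

lemma sprod_reverse_apply (l : List (Fin n)) (x : V) :
    sprod D l.reverse (sprod D l x) = x := by
  induction l generalizing x with
  | nil => rfl
  | cons i l ih =>
      rw [List.reverse_cons, sprod_append, sprod_cons]
      show sprod D l.reverse ((sprod D [i]) (sref (D.simple i) (sprod D l x)))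
        = x
      show sprod D l.reverse (sref (D.simple i) (sref (D.simple i) (sprod D l x))) = x
      rw [sref_sref, ih]

lemma sprod_apply_reverse (l : List (Fin n)) (x : V) :
    sprod D l (sprod D l.reverse x) = x := by
  have := sprod_reverse_apply (D := D) l.reverse x
  rwa [List.reverse_reverse] at this

/-- The main descent lemma on positive roots: the coroot of a positive root lies in the
coroot lattice, and its reflection is a product of simple reflections. -/
lemma root_descent : ∀ N : ℕ, ∀ β ∈ D.Rpos, ∀ c : Fin n → ℕ,
    β = ∑ i, (c i : ℝ) • D.simple i → (∑ i, c i) ≤ N →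
    coroot' β ∈ corL D ∧ ∃ l, sref β = sprod D l := by
  intro N
  induction N with
  | zero =>
      intro β hβ c hc hle
      exfalso
      have hz : ∀ i, c i = 0 := by
        intro i
        have h2 : c i ≤ ∑ j, c j :=
          Finset.single_le_sum (fun j _ => Nat.zero_le _) (Finset.mem_univ i)
        omega
      refine root_ne_zero hβ ?_
      rw [hc]
      simp [hz]
  | succ N ih =>
      intro β hβ c hc hle
      -- find a simple root pairing positively with β
      have hsum : 0 < ∑ i, (c i : ℝ) * ⟪D.simple i, β⟫ := by
        have h0 : 0 < ⟪β, β⟫ := inner_self_pos' (root_ne_zero hβ)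
        have he : ⟪β, β⟫ = ∑ i, (c i : ℝ) * ⟪D.simple i, β⟫ := by
          nth_rewrite 1 [hc]
          rw [sum_inner]
          exact Finset.sum_congr rfl fun i _ => real_inner_smul_left _ _ _
        linarith
      have hex : ∃ i, 0 < ⟪D.simple i, β⟫ := by
        by_contra hnone
        push_neg at hnone
        have : ∑ i, (c i : ℝ) * ⟪D.simple i, β⟫ ≤ 0 := by
          refine Finset.sum_nonpos fun i _ => ?_
          exact mul_nonpos_of_nonneg_of_nonpos (Nat.cast_nonneg _) (hnone i)
        linarith
      obtain ⟨i, hipos⟩ := hex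
      by_cases hne : β = D.simple i
      · subst hne
        refine ⟨Submodule.subset_span ⟨i, rfl⟩, ⟨[i], ?_⟩⟩
        rw [sprod_cons, sprod_nil]
        rfl
      · -- descend to β' = sᵢ β
        obtain ⟨z, hz⟩ := D.hcrys _ (D.hsimple i) _ hβ
        have hzpos : 0 < z := by
          have : (0:ℝ) < ⟪β, coroot' (D.simple i)⟫ := by
            rw [coroot', real_inner_smul_right, real_inner_comm (D.simple i) β]
            exact mul_pos (div_pos two_pos (simple_inner_pos D i)) hipos
          rw [hz] at this
          exact_mod_cast this
        set β' := sref (D.simple i) β with hβ'def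
        have hβ' : β' ∈ D.Rpos := sref_simple_mem hβ i hne
        have hβ'eq : β' = β - (z : ℝ) • D.simple i := by
          rw [hβ'def, sref_apply', hz]
        obtain ⟨c', hc'⟩ := D.hposcomb β' hβ'
        -- compare coordinates
        have hco : ∀ j, ((c' j : ℝ)) = (c j : ℝ) - (if j = i then (z:ℝ) else 0) := by
          intro j
          have h1 : (rbasis D).repr β' j = (c' j : ℝ) := by rw [hc', repr_comb]
          have h2 : (rbasis D).repr β' j = (c j : ℝ) - (if j = i then (z:ℝ) else 0) := by
            have : β' = ∑ k, ((c k : ℝ) - (if k = i then (z:ℝ) else 0)) • D.simple k := by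
              simp_rw [sub_smul, ite_smul, zero_smul]
              rw [Finset.sum_sub_distrib,
                Finset.sum_ite_eq' Finset.univ i (fun k => (z:ℝ) • D.simple k),
                if_pos (Finset.mem_univ i), hβ'eq, hc]
            rw [this, repr_comb]
          rw [← h1, h2]
        have hcj : ∀ j, j ≠ i → c' j = c j := by
          intro j hj
          have := hco j
          rw [if_neg hj] at this
          exact_mod_cast (by linarith : ((c' j : ℝ)) = (c j : ℝ))
        have hci : c' i < c i := by
          have := hco i
          rw [if_pos rfl] at this
          have : ((c' i : ℝ)) < (c i : ℝ) := by
            have hz1 : (1:ℝ) ≤ (z:ℝ) := by exact_mod_cast hzpos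
            linarith
          exact_mod_cast this
        have hsumlt : (∑ j, c' j) < ∑ j, c j := by
          refine Finset.sum_lt_sum (fun j _ => ?_) ⟨i, Finset.mem_univ i, hci⟩
          rcases eq_or_ne j i with rfl | hj
          · exact le_of_lt hci
          · exact le_of_eq (hcj j hj)
        obtain ⟨hcor', l', hl'⟩ := ih β' hβ' c' hc' (by omega)
        constructor
        · -- coroot' β ∈ corL
          have hββ' : β = sref (D.simple i) β' := by rw [hβ'def, sref_sref]
          obtain ⟨z₂, hz₂⟩ := D.hcrys _ hβ' _ (D.hsimple i)
          have : coroot' β = coroot' β' - (z₂ : ℝ) • coroot' (D.simple i) := by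
            rw [hββ', coroot'_sref, sref_def, real_inner_comm (D.simple i) (coroot' β'), hz₂]
          rw [this, Int.cast_smul_eq_zsmul ℝ]
          exact sub_mem hcor' (Submodule.smul_mem _ z₂ (Submodule.subset_span ⟨i, rfl⟩))
        · -- sref β is a product of simple reflections
          refine ⟨i :: (l' ++ [i]), ?_⟩
          have hββ' : β = sref (D.simple i) β' := by rw [hβ'def, sref_sref]
          rw [hββ', sref_conj, hl', sprod_cons, sprod_append, sprod_cons, sprod_nil]
          rfl

lemma coroot'_mem_corL {β : V} (hβ : β ∈ D.Rpos) : coroot' β ∈ corL D := by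
  obtain ⟨c, hc⟩ := D.hposcomb β hβ
  exact (root_descent (∑ i, c i) β hβ c hc le_rfl).1

lemma sref_eq_sprod {β : V} (hβ : β ∈ D.Rpos) : ∃ l, sref β = sprod D l := by
  obtain ⟨c, hc⟩ := D.hposcomb β hβ
  exact (root_descent (∑ i, c i) β hβ c hc le_rfl).2

/-- Every element of `W₀` is a product of simple reflections. -/
lemma W0.eq_sprod {w : V → V} (hw : w ∈ W0Set D.Rpos) : ∃ l, w = sprod D l := by
  refine W0.induction (fun w => ∃ l, w = sprod D l) ⟨[], rfl⟩ ?_ w hw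
  intro α hα u _ ⟨l, hl⟩
  obtain ⟨la, hla⟩ := sref_eq_sprod hα
  exact ⟨la ++ l, by rw [sprod_append, ← hla, ← hl]⟩

end Lattice


section Coweight

variable {n : ℕ} {D : RSData V n}

/-- `W₀` preserves the coweight lattice and moves coweights within `Q`-cosets. -/
lemma W0.coweight_sub {w : V → V} (hw : w ∈ W0Set D.Rpos) {v : V} (hv : IsCoweight D v) :
    IsCoweight D (w v) ∧ w v - v ∈ corL D := by
  refine W0.induction (fun w => IsCoweight D (w v) ∧ w v - v ∈ corL D)
    ⟨hv, by simpa using Submodule.zero_mem _⟩ ?_ w hw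
  intro a ha u _ ⟨h1, h2⟩
  constructor
  · intro β hβ
    simp only [Function.comp_apply]
    have hadj : ⟪sref a (u v), β⟫ = ⟪u v, sref a β⟫ := sref_adj a (u v) β
    rcases D.hrefl _ ha _ hβ with h | h
    · obtain ⟨z, hz⟩ := h1 _ h
      exact ⟨z, by rw [hadj]; exact hz⟩
    · obtain ⟨z, hz⟩ := h1 _ h
      refine ⟨-z, ?_⟩
      rw [hadj, show (⟪u v, sref a β⟫ : ℝ) = -⟪u v, -(sref a β)⟫ by rw [inner_neg_right]; ring,
        hz]
      push_cast
      ring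
  · show sref a (u v) - v ∈ corL D
    have : sref a (u v) - v = (-(⟪u v, a⟫)) • coroot' a + (u v - v) := by
      rw [sref_def]
      module
    rw [this]
    obtain ⟨z, hz⟩ := h1 a ha
    rw [hz, show (-(z:ℝ)) • coroot' a = (-z : ℤ) • coroot' a by
      rw [← Int.cast_smul_eq_zsmul ℝ]; push_cast; ring_nf]
    exact Submodule.add_mem _ (Submodule.smul_mem _ _ (coroot'_mem_corL ha)) h2

end Coweight

section Deletion

variable {n : ℕ} {D : RSData V n}

/-- The deletion lemma. -/
lemma deletion : ∀ (l : List (Fin n)) (t : Fin n),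
    -(sprod D l (D.simple t)) ∈ D.Rpos →
    ∃ l' : List (Fin n), l'.length + 1 = l.length ∧
      sprod D l ∘ sref (D.simple t) = sprod D l' := by
  intro l
  induction l with
  | nil =>
      intro t h
      exfalso
      exact D.hdisj _ (D.hsimple t) (by simpa [sprod_nil] using h)
  | cons i l ih =>
      intro t h
      set γ := sprod D l (D.simple t) with hγ
      rcases W0.map_root (sprod_mem l) (D.hsimple t) with hpos | hneg
      · -- γ ∈ R⁺, so sᵢ γ ∉ R⁺ forces γ = αᵢ
        have hsneg : -(sref (D.simple i) γ) ∈ D.Rpos := by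
          simpa [sprod_cons] using h
        have hsnot : sref (D.simple i) γ ∉ D.Rpos := fun hmem => D.hdisj _ hmem hsneg
        have hγeq : γ = D.simple i := eq_simple_of_sref_not_mem hpos i hsnot
        refine ⟨l, rfl, ?_⟩
        have hconj : sref γ ∘ sprod D l = sprod D l ∘ sref (D.simple t) :=
          W0.conj (sprod_mem l) (D.simple t)
        funext x
        show sref (D.simple i) (sprod D l (sref (D.simple t) x)) = sprod D l x
        have h1 : sprod D l (sref (D.simple t) x) = sref γ (sprod D l x) :=
          (congrFun hconj x).symm
        rw [h1, hγeq, sref_sref]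
      · obtain ⟨l', hlen, hl'⟩ := ih t hneg
        refine ⟨i :: l', by simpa using congrArg Nat.succ hlen, ?_⟩
        calc sprod D (i :: l) ∘ sref (D.simple t)
            = sref (D.simple i) ∘ (sprod D l ∘ sref (D.simple t)) := rfl
          _ = sref (D.simple i) ∘ sprod D l' := by rw [hl']
          _ = sprod D (i :: l') := rfl

/-- The dominance cone: vectors with nonnegative simple-root coordinates. -/
def Ccone (D : RSData V n) : Set V := {v | ∀ i, 0 ≤ (rbasis D).repr v i}

lemma Ccone_zero (D : RSData V n) : (0 : V) ∈ Ccone D := by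
  intro i; simp

lemma Ccone_add {x y : V} (hx : x ∈ Ccone D) (hy : y ∈ Ccone D) : x + y ∈ Ccone D := by
  intro i
  rw [map_add]
  exact add_nonneg (hx i) (hy i)

lemma Ccone_smul {c : ℝ} (hc : 0 ≤ c) {x : V} (hx : x ∈ Ccone D) : c • x ∈ Ccone D := by
  intro i
  rw [map_smul]
  exact mul_nonneg hc (hx i)

lemma coroot'_mem_Ccone {β : V} (hβ : β ∈ D.Rpos) : coroot' β ∈ Ccone D := by
  have h2 : (0:ℝ) ≤ 2 / ⟪β, β⟫ := by
    have := inner_self_pos' (root_ne_zero hβ)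
    positivity
  intro i
  rw [coroot', map_smul]
  exact mul_nonneg h2 (root_repr_nonneg D hβ i)

/-- Key lemma: for a dominant `λ` and `w ∈ W₀`, `λ - wλ` lies in the positive cone. -/
lemma sub_sprod_mem_Ccone : ∀ N : ℕ, ∀ l : List (Fin n), l.length ≤ N →
    ∀ lam : V, (∀ α ∈ D.Rpos, 0 ≤ ⟪lam, α⟫) → lam - sprod D l lam ∈ Ccone D := by
  intro N
  induction N with
  | zero =>
      intro l hl lam _
      have : l = [] := List.length_eq_zero_iff.mp (Nat.le_zero.mp hl)
      subst this
      rw [show sprod D [] lam = lam from rfl, sub_self]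
      exact Ccone_zero D
  | succ N ih =>
      intro l hl lam hlam
      by_cases hred : ∃ l₂ : List (Fin n), l₂.length < l.length ∧ sprod D l₂ = sprod D l
      · obtain ⟨l₂, hlen, heq⟩ := hred
        rw [← heq]
        exact ih l₂ (by omega) lam hlam
      · push_neg at hred
        rcases List.eq_nil_or_concat l with rfl | ⟨l₁, t, rfl⟩
        · rw [show sprod D [] lam = lam from rfl, sub_self]
          exact Ccone_zero D
        · simp only [List.concat_eq_append] at hred hl ⊢
          have hγpos : sprod D l₁ (D.simple t) ∈ D.Rpos := by
            rcases W0.map_root (sprod_mem l₁) (D.hsimple t) with hp | hn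
            · exact hp
            · exfalso
              obtain ⟨l'', hlen'', hfun⟩ := deletion l₁ t hn
              have heq : sprod D l'' = sprod D (l₁ ++ [t]) := by
                rw [← hfun, sprod_append]
                congr 1
              have hlt : l''.length < (l₁ ++ [t]).length := by
                rw [List.length_append]
                simp only [List.length_singleton]
                omega
              exact hred l'' hlt heq
          have hlam_t : 0 ≤ ⟪lam, D.simple t⟫ := hlam _ (D.hsimple t)
          have hu := sprod_mem (D := D) l₁
          have hcomp : lam - sprod D (l₁ ++ [t]) lam
              = (lam - sprod D l₁ lam)
                + ⟪lam, D.simple t⟫ • coroot' (sprod D l₁ (D.simple t)) := by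
            have h1 : sprod D (l₁ ++ [t]) lam = sprod D l₁ (sref (D.simple t) lam) := by
              rw [sprod_append]; rfl
            have h2 : sref (D.simple t) lam
                = lam + (-⟪lam, D.simple t⟫) • coroot' (D.simple t) := by
              rw [sref_def]; module
            have h3 : sprod D l₁ (lam + (-⟪lam, D.simple t⟫) • coroot' (D.simple t))
                = sprod D l₁ lam
                  + (-⟪lam, D.simple t⟫) • sprod D l₁ (coroot' (D.simple t)) := by
              rw [W0.add hu, W0.smul hu]
            have h4 : sprod D l₁ (coroot' (D.simple t))
                = coroot' (sprod D l₁ (D.simple t)) := W0.coroot'_comm hu _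
            rw [h1, h2, h3, h4]
            module
          rw [hcomp]
          have hlen : l₁.length ≤ N := by
            rw [List.length_append] at hl
            simp only [List.length_singleton] at hl
            omega
          exact Ccone_add (ih l₁ hlen lam hlam)
            (Ccone_smul hlam_t (coroot'_mem_Ccone hγpos))

/-- For a dominant `λ` and `w ∈ W₀`, `λ - wλ` lies in the positive cone. -/
lemma sub_w0_mem_Ccone {w : V → V} (hw : w ∈ W0Set D.Rpos) {lam : V}
    (hlam : ∀ α ∈ D.Rpos, 0 ≤ ⟪lam, α⟫) : lam - w lam ∈ Ccone D := by
  obtain ⟨l, rfl⟩ := W0.eq_sprod hw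
  exact sub_sprod_mem_Ccone l.length l le_rfl lam hlam

end Deletion


section Final

variable {n : ℕ} {D : RSData V n}

/-- Elements of `W₀` as linear maps. -/
def W0.toLin {w : V → V} (hw : w ∈ W0Set D.Rpos) : V →ₗ[ℝ] V :=
  IsLinearMap.mk' w ⟨W0.add hw, W0.smul hw⟩

lemma W0.toLin_apply {w : V → V} (hw : w ∈ W0Set D.Rpos) (x : V) :
    W0.toLin hw x = w x := rfl

lemma W0.apply_eq_sum {w : V → V} (hw : w ∈ W0Set D.Rpos) (x : V) :
    w x = ∑ i, (rbasis D).repr x i • w (D.simple i) := by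
  conv_lhs => rw [← (rbasis D).sum_repr x, ← W0.toLin_apply hw]
  rw [map_sum]
  refine Finset.sum_congr rfl fun i _ => ?_
  rw [map_smul, W0.toLin_apply, rbasis_apply]

lemma w0set_finite : (W0Set D.Rpos : Set (V → V)).Finite := by
  classical
  set S : Set V := ↑D.Rpos ∪ (fun x : V => -x) '' ↑D.Rpos with hSdef
  have hS : S.Finite := D.Rpos.finite_toSet.union (D.Rpos.finite_toSet.image _)
  have hpi : (Set.univ.pi fun _ : Fin n => S).Finite := Set.Finite.pi fun _ => hS
  have himg : (fun (w : V → V) => fun i : Fin n => w (D.simple i)) '' (W0Set D.Rpos)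
      ⊆ Set.univ.pi fun _ => S := by
    rintro _ ⟨w, hw, rfl⟩ i _
    rcases W0.map_root hw (D.hsimple i) with h | h
    · exact Set.mem_union_left _ h
    · exact Set.mem_union_right _ ⟨-(w (D.simple i)), h, neg_neg _⟩
  refine Set.Finite.of_finite_image (hpi.subset himg) ?_
  intro w hw w' hw' h
  funext x
  rw [W0.apply_eq_sum hw x, W0.apply_eq_sum hw' x]
  refine Finset.sum_congr rfl fun i _ => ?_
  have hi := congrFun h i
  simp only at hi
  rw [hi]

lemma orbit_finite (lam : V) : {x | ∃ w ∈ W0Set D.Rpos, x = w lam}.Finite := by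
  have hsub : {x | ∃ w ∈ W0Set D.Rpos, x = w lam}
      ⊆ (fun w : V → V => w lam) '' (W0Set D.Rpos) := by
    rintro x ⟨w, hw, rfl⟩
    exact ⟨w, hw, rfl⟩
  exact (w0set_finite.image _).subset hsub

/-- `W₀`-stability of the convex hull of an orbit. -/
lemma w0_mem_convexHull {w : V → V} (hw : w ∈ W0Set D.Rpos) {lam x : V}
    (hx : x ∈ convexHull ℝ {y | ∃ u ∈ W0Set D.Rpos, y = u lam}) :
    w x ∈ convexHull ℝ {y | ∃ u ∈ W0Set D.Rpos, y = u lam} := by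
  set O := {y | ∃ u ∈ W0Set D.Rpos, y = u lam} with hO
  have himg : w '' O ⊆ O := by
    rintro _ ⟨y, ⟨u, hu, rfl⟩, rfl⟩
    exact ⟨w ∘ u, W0.comp_mem hw hu, rfl⟩
  have h1 : w x ∈ (W0.toLin hw) '' (convexHull ℝ O) := ⟨x, hx, rfl⟩
  rw [(W0.toLin hw).image_convexHull] at h1
  have h2 : ⇑(W0.toLin hw) '' O = w '' O := rfl
  rw [h2] at h1
  exact convexHull_mono himg h1

/-- The key separation argument: a dominant coweight below `λ` lies in `conv(W₀ λ)`. -/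
lemma dominant_mem_convexHull (lam : V) {μ : V}
    (hμdom : ∀ α ∈ D.Rpos, 0 ≤ ⟪μ, α⟫) (hQ : lam - μ ∈ QPlus D) :
    μ ∈ convexHull ℝ {x | ∃ w ∈ W0Set D.Rpos, x = w lam} := by
  haveI : FiniteDimensional ℝ V := Module.Finite.of_basis (rbasis D)
  by_contra hnot
  set O := {x | ∃ w ∈ W0Set D.Rpos, x = w lam} with hO
  have hOfin : O.Finite := orbit_finite lam
  have hclosed : IsClosed (convexHull ℝ O) := hOfin.isClosed_convexHull ℝ
  obtain ⟨f, u, hfa, hfx⟩ :=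
    geometric_hahn_banach_closed_point (convex_convexHull ℝ O) hclosed hnot
  set z : V := (InnerProductSpace.toDual ℝ V).symm f with hz
  have hzf : ∀ y, ⟪z, y⟫ = f y := fun y => InnerProductSpace.toDual_symm_apply
  obtain ⟨w, hw, hwdom, hwmon⟩ := exists_dominantish (D := D) z
  obtain ⟨w', hw', hinv1, hinv2⟩ := W0.inv hw
  have hw'lam : w' lam ∈ O := ⟨w', hw', rfl⟩
  have h1 : ⟪w z, lam⟫ = ⟪z, w' lam⟫ := W0.adj hw hw' hinv2 z lam
  have h2 : ⟪z, w' lam⟫ < u := by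
    rw [hzf]
    exact hfa _ (subset_convexHull ℝ O hw'lam)
  have h3 : u < ⟪z, μ⟫ := by rw [hzf]; exact hfx
  have h4 : ⟪z, μ⟫ ≤ ⟪w z, μ⟫ := by
    have hm := hwmon μ hμdom
    rw [real_inner_comm μ z, real_inner_comm μ (w z)]
    exact hm
  obtain ⟨cq, hcq⟩ := hQ
  have h5 : 0 ≤ ⟪w z, lam - μ⟫ := by
    rw [hcq, inner_sum]
    refine Finset.sum_nonneg fun i _ => ?_
    rw [real_inner_smul_right]
    refine mul_nonneg (Nat.cast_nonneg _) ?_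
    rw [coroot', real_inner_smul_right]
    refine mul_nonneg ?_ (hwdom _ (D.hsimple i))
    have := simple_inner_pos D i
    positivity
  rw [inner_sub_right] at h5
  linarith

lemma QPlus_sub_corL : QPlus D ⊆ (corL D : Set V) := by
  rintro v ⟨c, rfl⟩
  refine Submodule.sum_mem _ fun i _ => ?_
  rw [show ((c i : ℝ)) • coroot' (D.simple i) = ((c i : ℤ)) • coroot' (D.simple i) by
    rw [← Int.cast_smul_eq_zsmul ℝ]; norm_num]
  exact Submodule.smul_mem _ _ (Submodule.subset_span ⟨i, rfl⟩)

lemma mem_QPlus_of_Ccone_corL {v : V} (h1 : v ∈ Ccone D) (h2 : v ∈ corL D) :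
    v ∈ QPlus D := by
  obtain ⟨c, hc⟩ := (Submodule.mem_span_range_iff_exists_fun ℤ).mp h2
  have hv : v = ∑ i, ((c i : ℝ) * (2 / ⟪D.simple i, D.simple i⟫)) • D.simple i := by
    rw [← hc]
    refine Finset.sum_congr rfl fun i _ => ?_
    rw [← Int.cast_smul_eq_zsmul ℝ, coroot', smul_smul]
  have hnn : ∀ i, (0:ℝ) ≤ (c i : ℝ) := by
    intro i
    have hi := h1 i
    rw [hv, repr_comb] at hi
    have hpos : (0:ℝ) < 2 / ⟪D.simple i, D.simple i⟫ := by
      have := simple_inner_pos D i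
      positivity
    nlinarith
  refine ⟨fun i => (c i).toNat, ?_⟩
  rw [← hc]
  refine Finset.sum_congr rfl fun i _ => ?_
  rw [← Int.cast_smul_eq_zsmul ℝ]
  congr 1
  have : (0:ℤ) ≤ c i := by exact_mod_cast hnn i
  rw [show ((c i).toNat : ℝ) = (((c i).toNat : ℤ) : ℝ) by push_cast; ring,
    Int.toNat_of_nonneg this]

lemma sub_mem_Ccone_of_mem_hull {lam x : V} (hlam : ∀ α ∈ D.Rpos, 0 ≤ ⟪lam, α⟫)
    (hx : x ∈ convexHull ℝ {y | ∃ w ∈ W0Set D.Rpos, y = w lam}) : lam - x ∈ Ccone D := by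
  have hsub : {y | ∃ w ∈ W0Set D.Rpos, y = w lam} ⊆ {y | lam - y ∈ Ccone D} := by
    rintro _ ⟨w, hw, rfl⟩
    exact sub_w0_mem_Ccone hw hlam
  have hconv : Convex ℝ {y : V | lam - y ∈ Ccone D} := by
    intro y1 h1 y2 h2 a b ha hb hab
    show lam - (a • y1 + b • y2) ∈ Ccone D
    have he : lam - (a • y1 + b • y2) = a • (lam - y1) + b • (lam - y2) := by
      have : a • lam + b • lam = lam := by rw [← add_smul, hab, one_smul]
      rw [smul_sub, smul_sub]
      rw [show a • lam - a • y1 + (b • lam - b • y2)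
        = (a • lam + b • lam) - (a • y1 + b • y2) by abel, this]
    rw [he]
    exact Ccone_add (Ccone_smul ha h1) (Ccone_smul hb h2)
  exact convexHull_min hsub hconv hx

end Final

/-- For a dominant coweight `λ`, the saturated set `Π_λ` equals
`conv(W₀λ) ∩ (λ + Q)`: a coweight `μ` lies in `Π_λ` iff `μ ∈ λ + Q` and `μ` lies in the
convex hull of the Weyl group orbit of `λ`. -/
theorem PiSet_eq_convexHull_inter {n : ℕ} (D : RSData V n) (lam : V)
    (hlam : IsDominant D lam) :
    PiSet D lam =
      convexHull ℝ {x | ∃ w ∈ W0Set D.Rpos, x = w lam} ∩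
        {x | x - lam ∈ (Submodule.span ℤ (Set.range fun i : Fin n => coroot' (D.simple i)) : Submodule ℤ V)} := by
  ext x
  simp only [Set.mem_inter_iff, Set.mem_setOf_eq]
  constructor
  · rintro ⟨μ, ⟨⟨hμcw, hμdom⟩, hQ⟩, w, hw, rfl⟩
    constructor
    · exact w0_mem_convexHull hw (dominant_mem_convexHull lam hμdom hQ)
    · have h1 : w μ - μ ∈ corL D := (W0.coweight_sub hw hμcw).2
      have h2 : lam - μ ∈ corL D := QPlus_sub_corL hQ
      have he : w μ - lam = (w μ - μ) - (lam - μ) := by abel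
      show w μ - lam ∈ corL D
      rw [he]
      exact Submodule.sub_mem _ h1 h2
  · rintro ⟨hx, hlat⟩
    have hlat' : x - lam ∈ corL D := hlat
    -- x is a coweight
    have hxcw : IsCoweight D x := by
      intro α hα
      obtain ⟨z1, hz1⟩ := hlam.1 α hα
      obtain ⟨c, hc⟩ := (Submodule.mem_span_range_iff_exists_fun ℤ).mp hlat'
      set zf : Fin n → ℤ := fun i => Classical.choose (D.hcrys _ (D.hsimple i) _ hα) with hzf
      have hzspec : ∀ i, ⟪α, coroot' (D.simple i)⟫ = (zf i : ℝ) :=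
        fun i => Classical.choose_spec (D.hcrys _ (D.hsimple i) _ hα)
      have hz2 : ⟪x - lam, α⟫ = ((∑ i, c i * zf i : ℤ) : ℝ) := by
        rw [← hc, sum_inner]
        push_cast
        refine Finset.sum_congr rfl fun i _ => ?_
        rw [← Int.cast_smul_eq_zsmul ℝ, real_inner_smul_left]
        congr 1
        rw [real_inner_comm α (coroot' (D.simple i))]
        exact hzspec i
      refine ⟨z1 + ∑ i, c i * zf i, ?_⟩
      have : ⟪x, α⟫ = ⟪lam, α⟫ + ⟪x - lam, α⟫ := by
        rw [inner_sub_left]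
        ring
      rw [this, hz1, hz2]
      push_cast
      ring
    obtain ⟨w, hw, hwdom, _⟩ := exists_dominantish (D := D) x
    obtain ⟨w', hw', hinv1, hinv2⟩ := W0.inv hw
    have hμcw : IsCoweight D (w x) := (W0.coweight_sub hw hxcw).1
    refine ⟨w x, ⟨⟨hμcw, hwdom⟩, ?_⟩, w', hw', (hinv1 x).symm⟩
    refine mem_QPlus_of_Ccone_corL ?_ ?_
    · exact sub_mem_Ccone_of_mem_hull hlam.2 (w0_mem_convexHull hw hx)
    · have h1 : w x - x ∈ corL D := (W0.coweight_sub hw hxcw).2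
      have he : lam - w x = -(x - lam) - (w x - x) := by abel
      rw [he]
      exact Submodule.sub_mem _ (Submodule.neg_mem _ hlat') h1
end
end
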